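/- Let W be a suitable basis and U an integral basis of A, and let T ∈ K[x]^{n×n} be such that W = TU. Let e ∈ K[x] and M ∈ K[x]^{n×n} be such that eW′ = MW with gcd(e, entries of M) = 1. If a ∈ K̄ is a root of det(T), then a is a root of e. Consequently, if W is not a local integral basis at some a ∈ K̄, then a is a root of e. -/

import Mathlib

noncomputable section
open scoped Classical

open Polynomial

/-- Termwise derivative (w.r.t. `x`) of a generalized (Hahn/Puiseux) series in `x - a`:
the exponent-`q` coefficient of `P'` is `(q+1)` times the exponent-`(q+1)` coefficient of `P`. -/
def hderiv {F : Type} [Field F] (P : HahnSeries ℚ F) : HahnSeries ℚ F where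
  coeff q := ((q + 1 : ℚ) : F) * P.coeff (q + 1)
  isPWO_support' := by
    have hsub : (Function.support fun q : ℚ => ((q + 1 : ℚ) : F) * P.coeff (q + 1))
        ⊆ (fun q : ℚ => q - 1) '' P.support := by
      intro q hq
      refine ⟨q + 1, ?_, by ring⟩
      intro h0
      simp [Function.mem_support, h0] at hq
    exact (P.isPWO_support.image_of_monotoneOn
      (fun x _ y _ hxy => by simpa using hxy)).mono hsub

/-- The valuation of a generalized (Hahn/Puiseux) series: the least exponent occurring,
and `⊤` for the zero series. -/
def hval {F : Type} [Field F] (P : HahnSeries ℚ F) : WithTop ℚ :=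
  if h : P = 0 then ⊤
  else ((P.isWF_support.min (HahnSeries.support_nonempty_iff.mpr h) : ℚ) : WithTop ℚ)

/-- A series is ramified if some exponent in its support is not an integer. -/
def Ramified {F : Type} [Field F] (P : HahnSeries ℚ F) : Prop :=
  ∃ q ∈ P.support, ∀ z : ℤ, (z : ℚ) ≠ q

/-- The set of fractional (non-integer) exponents occurring in a series. -/
def fracSupport {F : Type} [Field F] (P : HahnSeries ℚ F) : Set ℚ :=
  {q | q ∈ P.support ∧ ∀ z : ℤ, (z : ℚ) ≠ q}

/-- The minimal fractional exponent `δ(P)` of a series; `⊤` if `P` is not ramified. -/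
def delta {F : Type} [Field F] (P : HahnSeries ℚ F) : WithTop ℚ :=
  if h : (fracSupport P).Nonempty then
    (((P.isWF_support.mono (fun q hq => hq.1)).min h : ℚ) : WithTop ℚ)
  else ⊤

/-- A Hahn series over `ℚ` is a Puiseux series if its exponents have a common denominator. -/
def IsPuiseux {F : Type} [Field F] (P : HahnSeries ℚ F) : Prop :=
  ∃ r : ℕ, 0 < r ∧ ∀ q ∈ P.support, ∃ z : ℤ, (z : ℚ) / r = q

/-! ### The algebraic function field `A = K(x)[y]/⟨m⟩` -/

/-- The canonical image in `A = K(x)[y]/⟨m⟩` of a polynomial `p ∈ K[x]`. -/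
def toA {K : Type} [Field K] (m : Polynomial (RatFunc K)) (p : Polynomial K) :
    AdjoinRoot m :=
  algebraMap (RatFunc K) (AdjoinRoot m) (algebraMap (Polynomial K) (RatFunc K) p)

/-- `D` is the derivation on `A = K(x)[y]/⟨m⟩` extending `d/dx` on `K(x)`:
it is additive, satisfies the Leibniz rule, and restricts to `d/dx` on `K[x]`
(hence, being a derivation on a field, on all of `K(x)`). -/
structure IsDerivationOnA {K : Type} [Field K] (m : Polynomial (RatFunc K))
    (D : AdjoinRoot m → AdjoinRoot m) : Prop where
  map_add : ∀ f g, D (f + g) = D f + D g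
  leibniz : ∀ f g, D (f * g) = f * D g + g * D f
  map_poly : ∀ p : Polynomial K, D (toA m p) = toA m (Polynomial.derivative p)

/-- `W` is a basis of `A` as a vector space over `K(x)`. -/
def IsKxBasis {K : Type} [Field K] {m : Polynomial (RatFunc K)}
    (W : Fin m.natDegree → AdjoinRoot m) : Prop :=
  LinearIndependent (RatFunc K) W ∧ Submodule.span (RatFunc K) (Set.range W) = ⊤

/-- `e W′ = M W` componentwise. -/
def DerivRel {K : Type} [Field K] {m : Polynomial (RatFunc K)}
    (D : AdjoinRoot m → AdjoinRoot m) (W : Fin m.natDegree → AdjoinRoot m)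
    (e : Polynomial K) (M : Matrix (Fin m.natDegree) (Fin m.natDegree) (Polynomial K)) : Prop :=
  ∀ i, toA m e * D (W i) = ∑ j, toA m (M i j) * W j

/-- `gcd(e, m₁₁, …, mₙₙ) = 1`: the only common divisors of `e` and the entries of `M`
are units. -/
def GcdOne {K : Type} [Field K] {n : ℕ}
    (e : Polynomial K) (M : Matrix (Fin n) (Fin n) (Polynomial K)) : Prop :=
  ∀ p : Polynomial K, p ∣ e → (∀ i j, p ∣ M i j) → IsUnit p

/-! ### Puiseux expansions around a point `a` of the algebraic closure -/

/-- The family of the `n` distinct `K(x)`-embeddings of `A = K(x)[y]/⟨m⟩` into the field of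
Puiseux series around a point `a`: each embedding is a ring homomorphism into the Hahn series
field whose values are Puiseux series, sending constants `c ∈ K` to constant series and the
rational function `x` to `a + (x - a)`, i.e. to the series `a + t` where `t` stands
for `x - a`. -/
structure EmbFamily (K F : Type) [Field K] [Field F] [Algebra K F]
    (m : Polynomial (RatFunc K)) (a : F) where
  emb : Fin m.natDegree → (AdjoinRoot m →+* HahnSeries ℚ F)
  emb_injective : Function.Injective emb
  emb_C : ∀ i (c : K), emb i (toA m (Polynomial.C c)) = HahnSeries.single 0 (algebraMap K F c)
  emb_X : ∀ i, emb i (toA m Polynomial.X) =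
    HahnSeries.single 0 a + HahnSeries.single 1 1
  emb_puiseux : ∀ i f, IsPuiseux (emb i f)

/-- The embeddings around `a` are differential homomorphisms: they intertwine the derivation
`D` on `A` with the termwise derivative of series. -/
def IsDiffFamily {K F : Type} [Field K] [Field F] [Algebra K F]
    {m : Polynomial (RatFunc K)} {a : F} (D : AdjoinRoot m → AdjoinRoot m)
    (σ : EmbFamily K F m a) : Prop :=
  ∀ i f, σ.emb i (D f) = hderiv (σ.emb i f)

/-- `f ∈ A` is locally integral at `a`, i.e. `val_a(f) ≥ 0`: all Puiseux series associated
to `f` around `a` have nonnegative valuation. -/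
def LocIntegralAt {K F : Type} [Field K] [Field F] [Algebra K F]
    {m : Polynomial (RatFunc K)} {a : F} (σ : EmbFamily K F m a)
    (f : AdjoinRoot m) : Prop :=
  ∀ i, 0 ≤ hval (σ.emb i f)

/-- `a` is a branch point of `f ∈ A`: one of the Puiseux series associated to `f` around `a`
is ramified. -/
def IsBranchPointOf {K F : Type} [Field K] [Field F] [Algebra K F]
    {m : Polynomial (RatFunc K)} {a : F} (σ : EmbFamily K F m a)
    (f : AdjoinRoot m) : Prop :=
  ∃ i, Ramified (σ.emb i f)

/-- `f ∈ A` is (globally) integral: locally integral at every point `a` of the algebraic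
closure of `K` (given the system `σ` of Puiseux expansions around each point). -/
def IntegralElem {K : Type} [Field K] {m : Polynomial (RatFunc K)}
    (σ : ∀ a : AlgebraicClosure K, EmbFamily K (AlgebraicClosure K) m a)
    (f : AdjoinRoot m) : Prop :=
  ∀ a, LocIntegralAt (σ a) f

/-- `W` is an integral basis of `A`: a `K(x)`-vector-space basis consisting of integral
elements such that every integral element is a `K[x]`-linear combination of `W`. -/
def IsIntegralBasis {K : Type} [Field K] {m : Polynomial (RatFunc K)}
    (σ : ∀ a : AlgebraicClosure K, EmbFamily K (AlgebraicClosure K) m a)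
    (W : Fin m.natDegree → AdjoinRoot m) : Prop :=
  IsKxBasis W ∧ (∀ i, IntegralElem σ (W i)) ∧
    ∀ f, IntegralElem σ f → ∃ c : Fin m.natDegree → Polynomial K,
      f = ∑ i, toA m (c i) * W i

/-- The rational function `r ∈ K(x)` has no pole at `a`: `r = p/q` with `q(a) ≠ 0`. -/
def NoPoleAt {K F : Type} [Field K] [Field F] [Algebra K F] (a : F) (r : RatFunc K) : Prop :=
  ∃ p q : Polynomial K, Polynomial.aeval a q ≠ 0 ∧
    r * algebraMap (Polynomial K) (RatFunc K) q = algebraMap (Polynomial K) (RatFunc K) p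

/-- `W` is a local integral basis of `A` at `a`: a `K(x)`-vector-space basis consisting of
elements that are locally integral at `a`, such that every element of `A` that is locally
integral at `a` is a linear combination of `W` with coefficients in `K(x)_a` (rational
functions without a pole at `a`). -/
def IsLocalIntegralBasisAt {K F : Type} [Field K] [Field F] [Algebra K F]
    {m : Polynomial (RatFunc K)} {a : F} (σ : EmbFamily K F m a)
    (W : Fin m.natDegree → AdjoinRoot m) : Prop :=
  IsKxBasis W ∧ (∀ i, LocIntegralAt σ (W i)) ∧
    ∀ f, LocIntegralAt σ f → ∃ c : Fin m.natDegree → RatFunc K,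
      (∀ i, NoPoleAt a (c i)) ∧ f = ∑ i, algebraMap (RatFunc K) (AdjoinRoot m) (c i) * W i

set_option maxHeartbeats 1000000
set_option synthInstance.maxHeartbeats 1000000

-- aux lemmas
namespace Aux

variable {F : Type} [Field F]

lemma hval_eq_orderTop (P : HahnSeries ℚ F) : hval P = P.orderTop := rfl

lemma hval_zero : hval (0 : HahnSeries ℚ F) = ⊤ := by simp [hval]

lemma hval_eq_top_iff {P : HahnSeries ℚ F} : hval P = ⊤ ↔ P = 0 := by
  rw [hval_eq_orderTop]; exact HahnSeries.orderTop_eq_top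

lemma hval_mul (P Q : HahnSeries ℚ F) : hval (P * Q) = hval P + hval Q := by
  by_cases hP : P = 0
  · simp [hP, hval_zero]
  by_cases hQ : Q = 0
  · simp [hQ, hval_zero]
  have hPQ : P * Q ≠ 0 := mul_ne_zero hP hQ
  rw [hval_eq_orderTop, hval_eq_orderTop, hval_eq_orderTop, HahnSeries.orderTop_mul]

lemma hval_coeff_zero {P : HahnSeries ℚ F} {q : ℚ} (h : (q : WithTop ℚ) < hval P) :
    P.coeff q = 0 := by
  rw [hval_eq_orderTop] at h
  exact HahnSeries.coeff_eq_zero_of_lt_orderTop h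

lemma hval_le_of_coeff_ne_zero {P : HahnSeries ℚ F} {q : ℚ} (h : P.coeff q ≠ 0) :
    hval P ≤ (q : WithTop ℚ) := by
  rw [hval_eq_orderTop]; exact HahnSeries.orderTop_le_of_coeff_ne_zero h

lemma hval_eq_of_coeff {P : HahnSeries ℚ F} {c : ℚ} (hc : P.coeff c ≠ 0)
    (hmin : ∀ q : ℚ, q < c → P.coeff q = 0) : hval P = (c : WithTop ℚ) := by
  rw [hval_eq_orderTop]
  refine HahnSeries.orderTop_eq_of_le hc ?_
  intro g hg
  by_contra hlt
  exact hg (hmin g (lt_of_not_ge hlt))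

/-- The subring of series with nonnegative valuation. -/
def nonnegSR (F : Type) [Field F] : Subring (HahnSeries ℚ F) where
  carrier := {P | ∀ q : ℚ, q < 0 → P.coeff q = 0}
  zero_mem' := by intro q hq; simp
  one_mem' := by
    intro q hq
    rw [HahnSeries.coeff_one]
    simp [ne_of_lt hq]
  add_mem' := by
    intro x y hx hy q hq
    rw [HahnSeries.coeff_add, hx q hq, hy q hq, add_zero]
  neg_mem' := by
    intro x hx q hq
    rw [HahnSeries.coeff_neg, hx q hq, neg_zero]
  mul_mem' := by
    intro x y hx hy q hq
    rw [HahnSeries.coeff_mul]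
    refine Finset.sum_eq_zero fun ij hij => ?_
    rw [Finset.mem_addAntidiagonal] at hij
    obtain ⟨h1, h2, h3⟩ := hij
    have hx1 : (0:ℚ) ≤ ij.1 := by
      by_contra h; exact h1 (hx ij.1 (lt_of_not_ge h))
    have hy1 : (0:ℚ) ≤ ij.2 := by
      by_contra h; exact h2 (hy ij.2 (lt_of_not_ge h))
    nlinarith [hq, h3]

lemma mem_nonnegSR_iff {P : HahnSeries ℚ F} : P ∈ nonnegSR F ↔ 0 ≤ hval P := by
  constructor
  · intro h
    by_contra hlt
    push_neg at hlt
    have hP : P ≠ 0 := by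
      intro h0; rw [h0, hval_zero] at hlt; exact absurd le_top (not_le.mpr hlt)
    rw [hval_eq_orderTop, HahnSeries.orderTop_of_ne_zero hP] at hlt
    have hmin : (P.isWF_support.min (HahnSeries.support_nonempty_iff.mpr hP) : ℚ) < 0 := by
      exact_mod_cast hlt
    have : P.coeff (P.isWF_support.min (HahnSeries.support_nonempty_iff.mpr hP)) ≠ 0 :=
      P.isWF_support.min_mem _
    exact this (h _ hmin)
  · intro h q hq
    refine hval_coeff_zero ?_
    exact lt_of_lt_of_le (by exact_mod_cast hq) h

lemma coeff_zero_mul {x y : HahnSeries ℚ F} (hx : x ∈ nonnegSR F) (hy : y ∈ nonnegSR F) :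
    (x * y).coeff 0 = x.coeff 0 * y.coeff 0 := by
  rw [HahnSeries.coeff_mul]
  rcases eq_or_ne (x.coeff 0) 0 with h0 | h0
  · rw [h0, zero_mul]
    refine Finset.sum_eq_zero fun ij hij => ?_
    rw [Finset.mem_addAntidiagonal] at hij
    obtain ⟨h1, h2, h3⟩ := hij
    have hx1 : (0:ℚ) ≤ ij.1 := by
      by_contra h; exact h1 (hx ij.1 (lt_of_not_ge h))
    have hy1 : (0:ℚ) ≤ ij.2 := by
      by_contra h; exact h2 (hy ij.2 (lt_of_not_ge h))
    have : ij.1 = 0 := le_antisymm (by linarith) hx1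
    exact absurd (this ▸ h0) h1
  rcases eq_or_ne (y.coeff 0) 0 with h0' | h0'
  · rw [h0', mul_zero]
    refine Finset.sum_eq_zero fun ij hij => ?_
    rw [Finset.mem_addAntidiagonal] at hij
    obtain ⟨h1, h2, h3⟩ := hij
    have hx1 : (0:ℚ) ≤ ij.1 := by
      by_contra h; exact h1 (hx ij.1 (lt_of_not_ge h))
    have hy1 : (0:ℚ) ≤ ij.2 := by
      by_contra h; exact h2 (hy ij.2 (lt_of_not_ge h))
    have : ij.2 = 0 := le_antisymm (by linarith) hy1
    exact absurd (this ▸ h0') h2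
  · refine Finset.sum_eq_single ((0,0) : ℚ × ℚ) ?_ ?_
    · intro b hb hbne
      rw [Finset.mem_addAntidiagonal] at hb
      obtain ⟨h1, h2, h3⟩ := hb
      have hx1 : (0:ℚ) ≤ b.1 := by
        by_contra h; exact h1 (hx b.1 (lt_of_not_ge h))
      have hy1 : (0:ℚ) ≤ b.2 := by
        by_contra h; exact h2 (hy b.2 (lt_of_not_ge h))
      have hb1 : b.1 = 0 := le_antisymm (by linarith) hx1
      have hb2 : b.2 = 0 := le_antisymm (by linarith) hy1
      exact absurd (Prod.ext hb1 hb2) hbne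
    · intro hnot
      exfalso
      exact hnot (Finset.mem_addAntidiagonal.mpr ⟨h0, h0', add_zero 0⟩)

/-- Evaluation at the point: the constant coefficient, as a ring hom on `nonnegSR`. -/
def coeffZero (F : Type) [Field F] : nonnegSR F →+* F where
  toFun P := (P : HahnSeries ℚ F).coeff 0
  map_one' := by show ((1 : nonnegSR F) : HahnSeries ℚ F).coeff 0 = 1; rw [Subring.coe_one, HahnSeries.coeff_one]; simp
  map_mul' x y := coeff_zero_mul x.2 y.2
  map_zero' := by simp
  map_add' x y := by show ((x + y : nonnegSR F) : HahnSeries ℚ F).coeff 0 = _; rw [Subring.coe_add, HahnSeries.coeff_add]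

end Aux
namespace Aux

variable {F : Type} [Field F]

lemma hderiv_coeff (P : HahnSeries ℚ F) (q : ℚ) :
    (hderiv P).coeff q = ((q + 1 : ℚ) : F) * P.coeff (q + 1) := rfl

lemma hderiv_add (P Q : HahnSeries ℚ F) : hderiv (P + Q) = hderiv P + hderiv Q := by
  ext q
  simp [hderiv_coeff, HahnSeries.coeff_add, mul_add]

/-- `hderiv` as an additive monoid hom. -/
def hderivHom (F : Type) [Field F] : HahnSeries ℚ F →+ HahnSeries ℚ F :=
  AddMonoidHom.mk' hderiv hderiv_add

lemma shiftSet_isPWO (P : HahnSeries ℚ F) : ((fun g : ℚ => g - 1) '' P.support).IsPWO :=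
  P.isPWO_support.image_of_monotoneOn (fun x _ y _ hxy => by simpa using hxy)

lemma hderiv_support_subset (P : HahnSeries ℚ F) :
    (hderiv P).support ⊆ (fun g : ℚ => g - 1) '' P.support := by
  intro w hw
  rw [HahnSeries.mem_support, hderiv_coeff] at hw
  exact ⟨w + 1, fun h0 => hw (by rw [h0, mul_zero]), by ring⟩

theorem hderiv_mul [CharZero F] (P Q : HahnSeries ℚ F) :
    hderiv (P * Q) = P * hderiv Q + Q * hderiv P := by
  ext q
  rw [HahnSeries.coeff_add, hderiv_coeff, HahnSeries.coeff_mul, Finset.mul_sum,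
    mul_comm Q (hderiv P),
    HahnSeries.coeff_mul_right' (shiftSet_isPWO Q) (hderiv_support_subset Q),
    HahnSeries.coeff_mul_left' (shiftSet_isPWO P) (hderiv_support_subset P)]
  have h1 : ∑ ij ∈ Finset.antidiagonal P.isPWO_support (shiftSet_isPWO Q) q,
        P.coeff ij.1 * (hderiv Q).coeff ij.2
      = ∑ ij ∈ Finset.antidiagonal P.isPWO_support Q.isPWO_support (q + 1),
        ((ij.2 : ℚ) : F) * (P.coeff ij.1 * Q.coeff ij.2) := by
    refine Finset.sum_nbij' (fun ij => (ij.1, ij.2 + 1)) (fun ij => (ij.1, ij.2 - 1))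
        ?_ ?_ ?_ ?_ ?_
    · intro ij hij
      rw [Finset.mem_antidiagonal] at hij ⊢
      obtain ⟨ha, hb, hc⟩ := hij
      obtain ⟨g, hg, hg'⟩ := hb
      refine ⟨ha, ?_, by simp only; linarith⟩
      simpa [show ij.2 + 1 = g by simp only at hg'; linarith] using hg
    · intro ij hij
      rw [Finset.mem_antidiagonal] at hij ⊢
      obtain ⟨ha, hb, hc⟩ := hij
      exact ⟨ha, ⟨ij.2, hb, rfl⟩, by simp only; linarith⟩
    · intro ij _; ext <;> simp
    · intro ij _; ext <;> simp
    · intro ij _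
      rw [hderiv_coeff]
      simp only
      ring
  have h2 : ∑ ij ∈ Finset.antidiagonal (shiftSet_isPWO P) Q.isPWO_support q,
        (hderiv P).coeff ij.1 * Q.coeff ij.2
      = ∑ ij ∈ Finset.antidiagonal P.isPWO_support Q.isPWO_support (q + 1),
        ((ij.1 : ℚ) : F) * (P.coeff ij.1 * Q.coeff ij.2) := by
    refine Finset.sum_nbij' (fun ij => (ij.1 + 1, ij.2)) (fun ij => (ij.1 - 1, ij.2))
        ?_ ?_ ?_ ?_ ?_
    · intro ij hij
      rw [Finset.mem_antidiagonal] at hij ⊢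
      obtain ⟨ha, hb, hc⟩ := hij
      obtain ⟨g, hg, hg'⟩ := ha
      refine ⟨?_, hb, by simp only; linarith⟩
      simpa [show ij.1 + 1 = g by simp only at hg'; linarith] using hg
    · intro ij hij
      rw [Finset.mem_antidiagonal] at hij ⊢
      obtain ⟨ha, hb, hc⟩ := hij
      exact ⟨⟨ij.1, ha, rfl⟩, hb, by simp only; linarith⟩
    · intro ij _; ext <;> simp
    · intro ij _; ext <;> simp
    · intro ij _
      rw [hderiv_coeff]
      simp only
      ring
  rw [h1, h2, ← Finset.sum_add_distrib]
  refine Finset.sum_congr rfl ?_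
  intro ij hij
  rw [Finset.mem_antidiagonal] at hij
  have : ij.1 + ij.2 = q + 1 := hij.2.2
  have : ((q + 1 : ℚ) : F) = ((ij.1 : ℚ) : F) + ((ij.2 : ℚ) : F) := by
    rw [← this, Rat.cast_add]
  rw [this]
  ring

end Aux
namespace Aux

section DDet

variable {R : Type} [CommRing R] (D : R →+ R)
  (hD : ∀ x y : R, D (x * y) = x * D y + y * D x)

include hD

lemma D_one : D 1 = 0 := by
  have h := hD 1 1
  rw [mul_one, one_mul] at h
  have h2 : D 1 + D 1 = D 1 + 0 := by rw [add_zero, ← h]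
  exact add_left_cancel h2

lemma D_prod {ι : Type} [DecidableEq ι] (s : Finset ι) (f : ι → R) :
    D (∏ i ∈ s, f i) = ∑ i ∈ s, D (f i) * ∏ j ∈ s.erase i, f j := by
  classical
  induction s using Finset.induction_on with
  | empty => simpa using D_one D hD
  | @insert a s ha ih =>
    rw [Finset.prod_insert ha, hD, ih, Finset.sum_insert ha, Finset.erase_insert ha,
      Finset.mul_sum]
    rw [add_comm]
    congr 1
    · ring
    refine Finset.sum_congr rfl fun i hi => ?_
    have hia : i ≠ a := fun h => ha (h ▸ hi)
    rw [Finset.erase_insert_of_ne hia.symm, Finset.prod_insert (fun h => ha (Finset.mem_of_mem_erase h))]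
    ring

lemma D_det {n : ℕ} (A : Matrix (Fin n) (Fin n) R) :
    D A.det = ∑ k, (A.updateRow k (fun j => D (A k j))).det := by
  classical
  have hconst : ∀ (z : ℤ) (x : R), D ((z : R) * x) = (z : R) * D x := by
    intro z x
    rw [← zsmul_eq_mul, map_zsmul, zsmul_eq_mul]
  have lhs : D A.det = ∑ σ : Equiv.Perm (Fin n), ∑ i,
      ((Equiv.Perm.sign σ : ℤ) : R) * (D (A (σ i) i) * ∏ j ∈ Finset.univ.erase i, A (σ j) j) := by
    rw [Matrix.det_apply', map_sum]
    refine Finset.sum_congr rfl fun σ _ => ?_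
    rw [hconst, D_prod D hD, Finset.mul_sum]
  have rhs : ∀ k, (A.updateRow k (fun j => D (A k j))).det
      = ∑ σ : Equiv.Perm (Fin n), ((Equiv.Perm.sign σ : ℤ) : R) *
        (D (A (σ (σ⁻¹ k)) (σ⁻¹ k)) * ∏ j ∈ Finset.univ.erase (σ⁻¹ k), A (σ j) j) := by
    intro k
    rw [Matrix.det_apply']
    refine Finset.sum_congr rfl fun σ _ => ?_
    congr 1
    rw [← Finset.mul_prod_erase Finset.univ _ (Finset.mem_univ (σ⁻¹ k))]
    congr 1
    · rw [Equiv.Perm.coe_inv, Equiv.apply_symm_apply, Matrix.updateRow_self]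
    · refine Finset.prod_congr rfl fun j hj => ?_
      have hj' : σ j ≠ k := by
        intro h
        exact (Finset.mem_erase.mp hj).1 (by rw [← h, Equiv.Perm.coe_inv, Equiv.symm_apply_apply])
      rw [Matrix.updateRow_ne hj']
  rw [lhs]
  have : ∀ σ : Equiv.Perm (Fin n), ∑ i,
      ((Equiv.Perm.sign σ : ℤ) : R) * (D (A (σ i) i) * ∏ j ∈ Finset.univ.erase i, A (σ j) j)
      = ∑ k, ((Equiv.Perm.sign σ : ℤ) : R) *
        (D (A (σ (σ⁻¹ k)) (σ⁻¹ k)) * ∏ j ∈ Finset.univ.erase (σ⁻¹ k), A (σ j) j) := by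
    intro σ
    exact (Equiv.sum_comp (σ⁻¹ : Equiv.Perm (Fin n))
      (fun i => ((Equiv.Perm.sign σ : ℤ) : R) *
        (D (A (σ i) i) * ∏ j ∈ Finset.univ.erase i, A (σ j) j))).symm
  rw [Finset.sum_congr rfl fun σ _ => this σ, Finset.sum_comm]
  exact Finset.sum_congr rfl fun k _ => (rhs k).symm

end DDet

end Aux
namespace Aux

section Rho

variable {K F : Type} [Field K] [Field F] [Algebra K F]

/-- The series `a + t`. -/
def xser (a : F) : HahnSeries ℚ F := HahnSeries.single 0 a + HahnSeries.single 1 1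

/-- Evaluation of polynomials at `a + t`, a ring hom `K[x] →+* HahnSeries ℚ F`. -/
def rho0 (a : F) : Polynomial K →+* HahnSeries ℚ F :=
  Polynomial.eval₂RingHom ((HahnSeries.C : F →+* HahnSeries ℚ F).comp (algebraMap K F)) (xser a)

variable {m : Polynomial (RatFunc K)} {a : F}

/-- `toA` as a ring hom. -/
def toARingHom (m : Polynomial (RatFunc K)) : Polynomial K →+* AdjoinRoot m :=
  (algebraMap (RatFunc K) (AdjoinRoot m)).comp (algebraMap (Polynomial K) (RatFunc K))

lemma toARingHom_apply (p : Polynomial K) : toARingHom m p = toA m p := rfl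

lemma emb_toA (σa : EmbFamily K F m a) (i : Fin m.natDegree) (p : Polynomial K) :
    σa.emb i (toA m p) = rho0 a p := by
  have : (σa.emb i).comp (toARingHom m) = rho0 a := by
    apply Polynomial.ringHom_ext
    · intro c
      have := σa.emb_C i c
      simp only [RingHom.comp_apply, toARingHom_apply]
      rw [this]
      simp [rho0, xser, HahnSeries.C]
    · have := σa.emb_X i
      simp only [RingHom.comp_apply, toARingHom_apply]
      rw [this]
      simp [rho0, xser]
  rw [← toARingHom_apply, ← this, RingHom.comp_apply]

lemma single_mem_nonnegSR {q : ℚ} (hq : 0 ≤ q) (c : F) :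
    HahnSeries.single q c ∈ nonnegSR F := by
  intro q' hq'
  rw [HahnSeries.coeff_single_of_ne (by rintro rfl; exact absurd hq (not_le.mpr hq'))]

lemma xser_mem_nonnegSR : xser a ∈ nonnegSR F :=
  Subring.add_mem _ (single_mem_nonnegSR le_rfl a) (single_mem_nonnegSR zero_le_one 1)

lemma rho0_C (c : K) : rho0 (K := K) a (Polynomial.C c)
    = HahnSeries.single 0 (algebraMap K F c) := by
  simp [rho0, HahnSeries.C]

lemma rho0_X : rho0 (K := K) a Polynomial.X = xser a := by simp [rho0]

lemma rho0_mem_nonnegSR (p : Polynomial K) : rho0 a p ∈ nonnegSR F := by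
  induction p using Polynomial.induction_on with
  | C c => rw [rho0_C]; exact single_mem_nonnegSR le_rfl _
  | add p q hp hq => rw [map_add]; exact Subring.add_mem _ hp hq
  | monomial n c ih =>
    rw [map_mul, map_pow, rho0_X, rho0_C]
    exact Subring.mul_mem _ (single_mem_nonnegSR le_rfl _)
      (Subring.pow_mem _ xser_mem_nonnegSR _)

lemma coeffZero_xser : (xser a).coeff 0 = a := by
  simp [xser, HahnSeries.coeff_single_of_ne (one_ne_zero : (1:ℚ) ≠ 0)]

lemma coeffZero_rho0 (p : Polynomial K) : (rho0 a p).coeff 0 = Polynomial.aeval a p := by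
  induction p using Polynomial.induction_on with
  | C c => rw [rho0_C]; simp
  | add p q hp hq => rw [map_add, HahnSeries.coeff_add, hp, hq, map_add]
  | monomial n c ih =>
    have h1 : (rho0 (K := K) a (Polynomial.C c * Polynomial.X ^ (n+1))).coeff 0
        = ((rho0 a (Polynomial.C c * Polynomial.X ^ n)) * xser a).coeff 0 := by
      congr 1
      rw [map_mul, map_mul, map_pow, map_pow, pow_succ]
      have hx : rho0 (K := K) a Polynomial.X = xser a := by simp [rho0]
      rw [hx]; ring
    rw [h1, coeff_zero_mul (rho0_mem_nonnegSR _) xser_mem_nonnegSR, ih, coeffZero_xser]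
    rw [map_mul, map_mul, map_pow, map_pow, Polynomial.aeval_X]
    ring

lemma hval_rho0_nonneg (p : Polynomial K) : 0 ≤ hval (rho0 a p) :=
  mem_nonnegSR_iff.mp (rho0_mem_nonnegSR p)

lemma hval_rho0_eq_zero {p : Polynomial K} (h : Polynomial.aeval a p ≠ 0) : hval (rho0 a p) = 0 := by
  refine le_antisymm ?_ (hval_rho0_nonneg p)
  have : (rho0 a p).coeff 0 ≠ 0 := by rw [coeffZero_rho0]; exact h
  simpa using hval_le_of_coeff_ne_zero this

end Rho

end Aux
namespace Aux

lemma natDegree_pos_of_fact {K : Type} [Field K] (m : Polynomial (RatFunc K))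
    [Fact (Irreducible m)] : 0 < m.natDegree := by
  have h : Irreducible m := Fact.out
  rcases Nat.eq_zero_or_pos m.natDegree with h0 | hp
  case inr => exact hp
  exfalso
  apply h.not_isUnit
  rw [Polynomial.eq_C_of_natDegree_eq_zero h0]
  refine Polynomial.isUnit_C.mpr (isUnit_iff_ne_zero.mpr ?_)
  intro hc
  apply h.ne_zero
  rw [Polynomial.eq_C_of_natDegree_eq_zero h0, hc, map_zero]

section RhoRat

variable {K F : Type} [Field K] [Field F] [Algebra K F]
  {m : Polynomial (RatFunc K)} [Fact (Irreducible m)] {a : F}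

/-- The common value of all embeddings on `K(x)`. -/
def rho (σa : EmbFamily K F m a) (r : RatFunc K) : HahnSeries ℚ F :=
  σa.emb ⟨0, natDegree_pos_of_fact m⟩ (algebraMap (RatFunc K) (AdjoinRoot m) r)

lemma rho0_ne_zero (σa : EmbFamily K F m a) {p : Polynomial K} (hp : p ≠ 0) :
    rho0 (K := K) a p ≠ 0 := by
  have h1 : toA m p ≠ 0 := by
    have hinj1 : Function.Injective (algebraMap (Polynomial K) (RatFunc K)) :=
      IsFractionRing.injective _ _
    have hinj2 : Function.Injective (algebraMap (RatFunc K) (AdjoinRoot m)) :=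
      (algebraMap (RatFunc K) (AdjoinRoot m)).injective
    intro h0
    apply hp
    apply hinj1
    apply hinj2
    rw [map_zero, map_zero, ← h0]
    rfl
  rw [← emb_toA σa ⟨0, natDegree_pos_of_fact m⟩ p]
  intro h0
  exact h1 ((σa.emb _).injective (by rw [h0, map_zero]))

lemma ratfunc_mul_denom (r : RatFunc K) :
    r * algebraMap (Polynomial K) (RatFunc K) r.denom
      = algebraMap (Polynomial K) (RatFunc K) r.num := by
  have hd : algebraMap (Polynomial K) (RatFunc K) r.denom ≠ 0 := by
    intro h0
    exact RatFunc.denom_ne_zero r ((IsFractionRing.injective _ _) (by rw [h0, map_zero]))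
  calc r * algebraMap (Polynomial K) (RatFunc K) r.denom
      = algebraMap (Polynomial K) (RatFunc K) r.num
          / algebraMap (Polynomial K) (RatFunc K) r.denom
          * algebraMap (Polynomial K) (RatFunc K) r.denom := by
        rw [RatFunc.num_div_denom r]
    _ = algebraMap (Polynomial K) (RatFunc K) r.num := div_mul_cancel₀ _ hd

lemma emb_ratfunc_mul (σa : EmbFamily K F m a) (i : Fin m.natDegree) (r : RatFunc K)
    {d p : Polynomial K} (heq : r * algebraMap (Polynomial K) (RatFunc K) d
      = algebraMap (Polynomial K) (RatFunc K) p) :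
    σa.emb i (algebraMap (RatFunc K) (AdjoinRoot m) r) * rho0 a d = rho0 a p := by
  have hA : algebraMap (RatFunc K) (AdjoinRoot m) r * toA m d = toA m p := by
    have := congrArg (algebraMap (RatFunc K) (AdjoinRoot m)) heq
    rw [map_mul] at this
    exact this
  have := congrArg (σa.emb i) hA
  rw [map_mul, emb_toA, emb_toA] at this
  exact this

lemma emb_algebraMap (σa : EmbFamily K F m a) (i : Fin m.natDegree) (r : RatFunc K) :
    σa.emb i (algebraMap (RatFunc K) (AdjoinRoot m) r) = rho σa r := by
  have hd : rho0 (K := K) a r.denom ≠ 0 := rho0_ne_zero σa (RatFunc.denom_ne_zero r)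
  have h1 := emb_ratfunc_mul σa i r (ratfunc_mul_denom r)
  have h2 := emb_ratfunc_mul σa ⟨0, natDegree_pos_of_fact m⟩ r (ratfunc_mul_denom r)
  exact mul_right_cancel₀ hd (h1.trans h2.symm)

lemma rho_algebraMap_poly (σa : EmbFamily K F m a) (p : Polynomial K) :
    rho σa (algebraMap (Polynomial K) (RatFunc K) p) = rho0 a p :=
  emb_toA σa _ p

lemma hval_rho0_pos (σa : EmbFamily K F m a) {p : Polynomial K} (hp : p ≠ 0)
    (hav : Polynomial.aeval a p = 0) : 0 < hval (rho0 (K := K) a p) := by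
  refine lt_of_le_of_ne (hval_rho0_nonneg p) ?_
  intro h0
  have : (rho0 (K := K) a p).coeff 0 ≠ 0 := by
    refine HahnSeries.coeff_orderTop_ne ?_
    rw [← hval_eq_orderTop, ← h0]
    rfl
  rw [coeffZero_rho0, hav] at this
  exact this rfl

theorem noPoleAt_of_hval_nonneg (σa : EmbFamily K F m a) (hint : IsIntegral K a)
    {r : RatFunc K} (h : 0 ≤ hval (rho σa r)) : NoPoleAt a r := by
  suffices H : ∀ (N : ℕ) (r : RatFunc K) (d p : Polynomial K), d ≠ 0 → d.natDegree ≤ N →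
      r * algebraMap (Polynomial K) (RatFunc K) d = algebraMap (Polynomial K) (RatFunc K) p →
      0 ≤ hval (rho σa r) → NoPoleAt a r by
    exact H r.denom.natDegree r r.denom r.num (RatFunc.denom_ne_zero r) le_rfl
      (ratfunc_mul_denom r) h
  intro N
  induction N using Nat.strong_induction_on with
  | _ N ih =>
    intro r d p hd hdeg heq hval0
    by_cases hda : Polynomial.aeval a d = 0
    · set μ := minpoly K a with hμdef
      have hμd : μ ∣ d := minpoly.dvd K a hda
      have hμ1 : 0 < μ.natDegree := minpoly.natDegree_pos hint
      have hμ0 : μ ≠ 0 := minpoly.ne_zero hint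
      have hrho : rho σa r * rho0 a d = rho0 a p := by
        have := emb_ratfunc_mul σa ⟨0, natDegree_pos_of_fact m⟩ r heq
        rwa [show σa.emb ⟨0, natDegree_pos_of_fact m⟩
          (algebraMap (RatFunc K) (AdjoinRoot m) r) = rho σa r from rfl] at this
      have hpa : Polynomial.aeval a p = 0 := by
        have hv : 0 < hval (rho0 (K := K) a p) := by
          rw [← hrho, hval_mul]
          calc (0 : WithTop ℚ) < hval (rho0 (K := K) a d) := hval_rho0_pos σa hd hda
            _ ≤ hval (rho σa r) + hval (rho0 (K := K) a d) := le_add_of_nonneg_left hval0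
        have h0 := hval_coeff_zero (P := rho0 (K := K) a p) (q := 0) (by exact_mod_cast hv)
        rwa [coeffZero_rho0] at h0
      have hμp : μ ∣ p := minpoly.dvd K a hpa
      obtain ⟨d', hd'⟩ := hμd
      obtain ⟨p', hp'⟩ := hμp
      have hd'0 : d' ≠ 0 := by
        rintro rfl
        rw [mul_zero] at hd'
        exact hd hd'
      have hμalg : algebraMap (Polynomial K) (RatFunc K) μ ≠ 0 := by
        intro h0
        exact hμ0 ((IsFractionRing.injective _ _) (by rw [h0, map_zero]))
      have heq' : r * algebraMap (Polynomial K) (RatFunc K) d'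
          = algebraMap (Polynomial K) (RatFunc K) p' := by
        apply mul_left_cancel₀ hμalg
        have h1 : algebraMap (Polynomial K) (RatFunc K) μ
            * (r * algebraMap (Polynomial K) (RatFunc K) d')
            = r * algebraMap (Polynomial K) (RatFunc K) d := by
          rw [hd', map_mul]; ring
        have h2 : algebraMap (Polynomial K) (RatFunc K) μ
            * algebraMap (Polynomial K) (RatFunc K) p'
            = algebraMap (Polynomial K) (RatFunc K) p := by
          rw [hp', map_mul]
        rw [h1, h2, heq]
      have hdegsum : d.natDegree = μ.natDegree + d'.natDegree := by
        rw [hd']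
        exact Polynomial.natDegree_mul hμ0 hd'0
      have hlt : d'.natDegree < N := by omega
      exact ih d'.natDegree hlt r d' p' hd'0 le_rfl heq' hval0
    · exact ⟨p, d, hda, heq⟩

/-- Rational functions without pole at `a` form a subring. -/
def noPoleSR (K : Type) [Field K] {F : Type} [Field F] [Algebra K F] (a : F) :
    Subring (RatFunc K) where
  carrier := {r | NoPoleAt a r}
  zero_mem' := ⟨0, 1, by simp, by simp⟩
  one_mem' := ⟨1, 1, by simp, by simp⟩
  add_mem' := by
    rintro r1 r2 ⟨p1, q1, hq1, he1⟩ ⟨p2, q2, hq2, he2⟩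
    refine ⟨p1 * q2 + p2 * q1, q1 * q2, by simp [hq1, hq2], ?_⟩
    rw [map_add, map_mul, map_mul, map_mul]
    calc (r1 + r2) * (algebraMap (Polynomial K) (RatFunc K) q1
          * algebraMap (Polynomial K) (RatFunc K) q2)
        = (r1 * algebraMap (Polynomial K) (RatFunc K) q1)
            * algebraMap (Polynomial K) (RatFunc K) q2
          + (r2 * algebraMap (Polynomial K) (RatFunc K) q2)
            * algebraMap (Polynomial K) (RatFunc K) q1 := by ring
      _ = _ := by rw [he1, he2]
  neg_mem' := by
    rintro r ⟨p, q, hq, he⟩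
    exact ⟨-p, q, hq, by rw [map_neg, neg_mul, he]⟩
  mul_mem' := by
    rintro r1 r2 ⟨p1, q1, hq1, he1⟩ ⟨p2, q2, hq2, he2⟩
    refine ⟨p1 * p2, q1 * q2, by simp [hq1, hq2], ?_⟩
    rw [map_mul, map_mul]
    calc r1 * r2 * (algebraMap (Polynomial K) (RatFunc K) q1
          * algebraMap (Polynomial K) (RatFunc K) q2)
        = (r1 * algebraMap (Polynomial K) (RatFunc K) q1)
          * (r2 * algebraMap (Polynomial K) (RatFunc K) q2) := by ring
      _ = _ := by rw [he1, he2]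

lemma noPoleAt_det {n : ℕ} (C : Matrix (Fin n) (Fin n) (RatFunc K))
    (h : ∀ i j, NoPoleAt a (C i j)) : NoPoleAt a C.det := by
  classical
  let C' : Matrix (Fin n) (Fin n) (noPoleSR K a) := fun i j => ⟨C i j, h i j⟩
  have hC : C = (noPoleSR K a).subtype.mapMatrix C' := by
    ext i j; rfl
  rw [hC, ← RingHom.map_det]
  exact (C'.det).2

end RhoRat

end Aux
set_option synthInstance.maxHeartbeats 1000000

namespace Aux

section Key

variable {K : Type} [Field K] {F : Type} [Field F] [Algebra K F] [CharZero F]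
  {m : Polynomial (RatFunc K)} [Fact (Irreducible m)] {a : F}

lemma det_mem_nonnegSR {n : ℕ} (A : Matrix (Fin n) (Fin n) (HahnSeries ℚ F))
    (h : ∀ i j, A i j ∈ nonnegSR F) : A.det ∈ nonnegSR F := by
  classical
  let A' : Matrix (Fin n) (Fin n) (nonnegSR F) := fun i j => ⟨A i j, h i j⟩
  have hA : A = (nonnegSR F).subtype.mapMatrix A' := by ext i j; rfl
  rw [hA, ← RingHom.map_det]
  exact (A'.det).2

lemma repr_exists {W : Fin m.natDegree → AdjoinRoot m} (hWb : IsKxBasis W)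
    (f : AdjoinRoot m) :
    ∃ c : Fin m.natDegree → RatFunc K,
      f = ∑ i, algebraMap (RatFunc K) (AdjoinRoot m) (c i) * W i := by
  have hf : f ∈ Submodule.span (RatFunc K) (Set.range W) := by
    rw [hWb.2]; exact Submodule.mem_top
  obtain ⟨c, hc⟩ := (Submodule.mem_span_range_iff_exists_fun (RatFunc K)).mp hf
  refine ⟨c, ?_⟩
  rw [← hc]
  exact Finset.sum_congr rfl fun i _ => (Algebra.smul_def (c i) (W i))

lemma hderivHom_apply (x : HahnSeries ℚ F) : hderivHom F x = hderiv x := rfl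

theorem keyLemma (σa : EmbFamily K F m a) (hint : IsIntegral K a)
    (D : AdjoinRoot m → AdjoinRoot m) (hdiff : IsDiffFamily D σa)
    (W : Fin m.natDegree → AdjoinRoot m)
    (e : Polynomial K) (M : Matrix (Fin m.natDegree) (Fin m.natDegree) (Polynomial K))
    (hWb : IsKxBasis W) (hrel : DerivRel D W e M)
    (hWint : ∀ i, LocIntegralAt σa (W i))
    (he : Polynomial.aeval a e ≠ 0) :
    IsLocalIntegralBasisAt σa W := by
  classical
  set Wmat : Matrix (Fin m.natDegree) (Fin m.natDegree) (HahnSeries ℚ F) :=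
    fun i j => σa.emb j (W i) with hWmatdef
  have hWmem : ∀ i j, Wmat i j ∈ nonnegSR F := fun i j => mem_nonnegSR_iff.mpr (hWint i j)
  have hembf : ∀ (f : AdjoinRoot m) (c : Fin m.natDegree → RatFunc K),
      f = ∑ i, algebraMap (RatFunc K) (AdjoinRoot m) (c i) * W i →
      ∀ j, σa.emb j f = ∑ i, rho σa (c i) * Wmat i j := by
    intro f c hc j
    rw [hc, map_sum]
    exact Finset.sum_congr rfl fun i _ => by rw [map_mul, emb_algebraMap]
  have hdet_mem : Wmat.det ∈ nonnegSR F := det_mem_nonnegSR Wmat hWmem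
  -- the determinant is nonzero (Dedekind independence of characters)
  have hdet_ne : Wmat.det ≠ 0 := by
    intro h0
    obtain ⟨v, hv0, hv⟩ := Matrix.exists_mulVec_eq_zero_iff.mpr h0
    have hrow0 : ∀ i, ∑ j, Wmat i j * v j = 0 := by
      intro i
      have := congrFun hv i
      simpa [Matrix.mulVec, dotProduct] using this
    have hall : ∀ f : AdjoinRoot m, ∑ j, v j * σa.emb j f = 0 := by
      intro f
      obtain ⟨c, hc⟩ := repr_exists hWb f
      calc ∑ j, v j * σa.emb j f
          = ∑ j, ∑ i, rho σa (c i) * Wmat i j * v j := by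
            refine Finset.sum_congr rfl fun j _ => ?_
            rw [hembf f c hc j, Finset.mul_sum]
            exact Finset.sum_congr rfl fun i _ => by ring
        _ = ∑ i, rho σa (c i) * ∑ j, Wmat i j * v j := by
            rw [Finset.sum_comm]
            exact Finset.sum_congr rfl fun i _ => by
              rw [Finset.mul_sum]
              exact Finset.sum_congr rfl fun j _ => by ring
        _ = 0 := by
            refine Finset.sum_eq_zero fun i _ => ?_
            rw [hrow0 i, mul_zero]
    have hLI : LinearIndependent (HahnSeries ℚ F)
        (fun j : Fin m.natDegree => ((σa.emb j : AdjoinRoot m →* HahnSeries ℚ F) :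
          AdjoinRoot m → HahnSeries ℚ F)) := by
      refine (linearIndependent_monoidHom (AdjoinRoot m) (HahnSeries ℚ F)).comp
        (fun j => (σa.emb j : AdjoinRoot m →* HahnSeries ℚ F)) ?_
      intro j k hjk
      apply σa.emb_injective
      refine RingHom.ext fun x => ?_
      exact DFunLike.congr_fun hjk x
    rw [Fintype.linearIndependent_iff] at hLI
    apply hv0
    funext j
    refine hLI v ?_ j
    funext f
    rw [Finset.sum_apply]
    simpa [Pi.smul_apply, smul_eq_mul] using hall f
  -- the determinant has valuation zero (Wronskian argument, uses e(a) ≠ 0)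
  have hdet_val : hval Wmat.det = 0 := by
    by_contra hne0
    have h0le : 0 ≤ hval Wmat.det := mem_nonnegSR_iff.mp hdet_mem
    have hnetop : hval Wmat.det ≠ ⊤ := fun h => hdet_ne (hval_eq_top_iff.mp h)
    obtain ⟨c, hc⟩ : ∃ c : ℚ, hval Wmat.det = (c : WithTop ℚ) := by
      cases h : hval Wmat.det with
      | top => exact absurd h hnetop
      | coe c => exact ⟨c, rfl⟩
    have hcpos : 0 < c := by
      have h1 : (0 : WithTop ℚ) ≤ (c : WithTop ℚ) := hc ▸ h0le
      have h2 : (0 : ℚ) ≤ c := by exact_mod_cast h1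
      refine lt_of_le_of_ne h2 ?_
      intro h3
      exact hne0 (by rw [hc, ← h3]; rfl)
    have hentry : ∀ i j, rho0 a e * hderiv (Wmat i j) = ∑ l, rho0 a (M i l) * Wmat l j := by
      intro i j
      calc rho0 a e * hderiv (Wmat i j)
          = σa.emb j (toA m e * D (W i)) := by
            rw [map_mul, emb_toA, hdiff j (W i)]
        _ = σa.emb j (∑ l, toA m (M i l) * W l) := by rw [hrel i]
        _ = ∑ l, rho0 a (M i l) * Wmat l j := by
            rw [map_sum]
            exact Finset.sum_congr rfl fun l _ => by rw [map_mul, emb_toA]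
    have hDdet := D_det (hderivHom F) hderiv_mul Wmat
    have hkey : rho0 a e * hderiv Wmat.det = (∑ k, rho0 a (M k k)) * Wmat.det := by
      rw [show hderiv Wmat.det = hderivHom F Wmat.det from rfl, hDdet, Finset.mul_sum,
        Finset.sum_mul]
      refine Finset.sum_congr rfl fun k _ => ?_
      rw [← Matrix.det_updateRow_smul]
      have harg : (rho0 a e • fun j => hderivHom F (Wmat k j)) =
          ∑ l, rho0 a (M k l) • Wmat l := by
        funext j
        rw [Pi.smul_apply, smul_eq_mul, hderivHom_apply, hentry k j, Finset.sum_apply]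
        exact Finset.sum_congr rfl fun l _ => by rw [Pi.smul_apply, smul_eq_mul]
      rw [harg, Matrix.det_updateRow_sum, smul_eq_mul]
    have hvL : hval (rho0 a e * hderiv Wmat.det) = ((c - 1 : ℚ) : WithTop ℚ) := by
      rw [hval_mul, hval_rho0_eq_zero he, zero_add]
      refine hval_eq_of_coeff ?_ ?_
      · rw [hderiv_coeff, show c - 1 + 1 = c by ring]
        refine mul_ne_zero ?_ ?_
        · exact Rat.cast_ne_zero.mpr (ne_of_gt hcpos)
        · refine HahnSeries.coeff_orderTop_ne ?_
          rw [← hval_eq_orderTop, hc]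
      · intro q hq
        rw [hderiv_coeff]
        have hcz : Wmat.det.coeff (q + 1) = 0 := by
          refine hval_coeff_zero ?_
          rw [hc]
          exact_mod_cast (by linarith : q + 1 < c)
        rw [hcz, mul_zero]
    have hvR : ((c : ℚ) : WithTop ℚ) ≤ hval ((∑ k, rho0 a (M k k)) * Wmat.det) := by
      rw [hval_mul, hc]
      have hmem : (∑ k, rho0 a (M k k)) ∈ nonnegSR F :=
        Subring.sum_mem _ fun k _ => rho0_mem_nonnegSR _
      exact le_add_of_nonneg_left (mem_nonnegSR_iff.mp hmem)
    have hfin : ((c : ℚ) : WithTop ℚ) ≤ ((c - 1 : ℚ) : WithTop ℚ) := by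
      rw [← hvL, hkey]; exact hvR
    have : c ≤ c - 1 := by exact_mod_cast hfin
    linarith
  -- conclusion
  refine ⟨hWb, hWint, ?_⟩
  intro f hf
  obtain ⟨cf, hcf⟩ := repr_exists hWb f
  refine ⟨cf, ?_, hcf⟩
  intro i0
  apply noPoleAt_of_hval_nonneg σa hint
  have hrowf : (fun j => σa.emb j f) = ∑ l, rho σa (cf l) • Wmat l := by
    funext j
    rw [hembf f cf hcf j, Finset.sum_apply]
    exact Finset.sum_congr rfl fun l _ => by rw [Pi.smul_apply, smul_eq_mul]
  have hcr : (Matrix.updateRow Wmat i0 (fun j => σa.emb j f)).det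
      = rho σa (cf i0) * Wmat.det := by
    rw [hrowf, Matrix.det_updateRow_sum, smul_eq_mul]
  have hmem2 : (Matrix.updateRow Wmat i0 (fun j => σa.emb j f)).det ∈ nonnegSR F := by
    refine det_mem_nonnegSR _ ?_
    intro i' j
    by_cases hi : i' = i0
    · subst hi
      rw [Matrix.updateRow_self]
      exact mem_nonnegSR_iff.mpr (hf j)
    · rw [Matrix.updateRow_ne hi]
      exact hWmem i' j
  have hval2 := mem_nonnegSR_iff.mp hmem2
  rw [hcr, hval_mul, hdet_val, add_zero] at hval2
  exact hval2

end Key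

end Aux

/-- Let `W` be a suitable basis and `U` an integral basis of `A`, and let
`T ∈ K[x]^{n×n}` be such that `W = TU`. Let `e ∈ K[x]` and `M ∈ K[x]^{n×n}` be such that
`eW′ = MW` with `gcd(e, entries of M) = 1`. If `a ∈ K̄` is a root of `det(T)`, then `a` is a
root of `e`. Consequently, if `W` is not a local integral basis at some `a ∈ K̄`, then `a`
is a root of `e`. -/
theorem root_of_e_of_root_of_det {K : Type} [Field K] [CharZero K]
    (m : Polynomial (RatFunc K)) [Fact (Irreducible m)]
    (D : AdjoinRoot m → AdjoinRoot m) (hD : IsDerivationOnA m D)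
    (σ : ∀ a : AlgebraicClosure K, EmbFamily K (AlgebraicClosure K) m a)
    (hσ : ∀ a, IsDiffFamily D (σ a))
    (W U : Fin m.natDegree → AdjoinRoot m)
    (e : Polynomial K) (M : Matrix (Fin m.natDegree) (Fin m.natDegree) (Polynomial K))
    -- `W` is a suitable basis:
    (hWb : IsKxBasis W) (hrel : DerivRel D W e M) (hgcd : GcdOne e M)
    (hsqf : Squarefree e) (hWint : ∀ i, IntegralElem σ (W i))
    -- `U` is an integral basis:
    (hU : IsIntegralBasis σ U)
    -- `W = TU`:
    (T : Matrix (Fin m.natDegree) (Fin m.natDegree) (Polynomial K))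
    (hWT : ∀ i, W i = ∑ j, toA m (T i j) * U j)
    (a : AlgebraicClosure K) :
    (Polynomial.aeval a T.det = 0 → Polynomial.aeval a e = 0) ∧
      (¬ IsLocalIntegralBasisAt (σ a) W → Polynomial.aeval a e = 0) := by
  classical
  haveI : CharZero (AlgebraicClosure K) :=
    charZero_of_injective_algebraMap (algebraMap K (AlgebraicClosure K)).injective
  have hint : IsIntegral K a := Algebra.IsIntegral.isIntegral a
  have key : Polynomial.aeval a e ≠ 0 → IsLocalIntegralBasisAt (σ a) W := fun he =>
    Aux.keyLemma (σ a) hint D (hσ a) W e M hWb hrel (fun i => (hWint i) a) he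
  constructor
  · intro hdet
    by_contra he
    have hlib := key he
    have hex : ∀ j, ∃ c : Fin m.natDegree → RatFunc K,
        (∀ i, NoPoleAt a (c i)) ∧
        U j = ∑ i, algebraMap (RatFunc K) (AdjoinRoot m) (c i) * W i :=
      fun j => hlib.2.2 (U j) ((hU.2.1 j) a)
    choose C hC1 hC2 using hex
    set Trat : Matrix (Fin m.natDegree) (Fin m.natDegree) (RatFunc K) :=
      (algebraMap (Polynomial K) (RatFunc K)).mapMatrix T with hTrat
    set Cmat : Matrix (Fin m.natDegree) (Fin m.natDegree) (RatFunc K) :=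
      fun j l => C j l with hCmat
    have hLI := Fintype.linearIndependent_iff.mp hWb.1
    have hTC : Trat * Cmat = 1 := by
      ext i l
      have h1 : ∑ l, (∑ j, Trat i j * Cmat j l) • W l = W i := by
        calc ∑ l, (∑ j, Trat i j * Cmat j l) • W l
            = ∑ l, ∑ j, Trat i j • (Cmat j l • W l) := by
              refine Finset.sum_congr rfl fun l _ => ?_
              rw [Finset.sum_smul]
              exact Finset.sum_congr rfl fun j _ => mul_smul _ _ _
          _ = ∑ j, Trat i j • ∑ l, Cmat j l • W l := by
              rw [Finset.sum_comm]
              exact Finset.sum_congr rfl fun j _ => (Finset.smul_sum).symm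
          _ = ∑ j, Trat i j • U j := by
              refine Finset.sum_congr rfl fun j _ => ?_
              congr 1
              rw [hC2 j]
              exact Finset.sum_congr rfl fun l _ => Algebra.smul_def _ _
          _ = W i := by
              rw [hWT i]
              exact Finset.sum_congr rfl fun j _ => Algebra.smul_def _ _
      have hone : ∑ l, ((1 : Matrix (Fin m.natDegree) (Fin m.natDegree) (RatFunc K)) i l) • W l
          = W i := by
        simp [Matrix.one_apply]
      have hsum0 : ∑ l, ((∑ j, Trat i j * Cmat j l)
          - (1 : Matrix (Fin m.natDegree) (Fin m.natDegree) (RatFunc K)) i l) • W l = 0 := by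
        simp only [sub_smul]
        rw [Finset.sum_sub_distrib, h1, hone, sub_self]
      have h3 := hLI _ hsum0 l
      rw [Matrix.mul_apply]
      exact sub_eq_zero.mp h3
    have hdet1 : Trat.det * Cmat.det = 1 := by
      rw [← Matrix.det_mul, hTC, Matrix.det_one]
    have hTdet : Trat.det = algebraMap (Polynomial K) (RatFunc K) T.det :=
      (RingHom.map_det _ T).symm
    obtain ⟨p, q, hq, heq⟩ := Aux.noPoleAt_det Cmat (fun i j => hC1 i j)
    have hkeyeq : algebraMap (Polynomial K) (RatFunc K) (T.det * p)
        = algebraMap (Polynomial K) (RatFunc K) q := by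
      rw [map_mul]
      calc algebraMap (Polynomial K) (RatFunc K) T.det * algebraMap (Polynomial K) (RatFunc K) p
          = algebraMap (Polynomial K) (RatFunc K) T.det
            * (Cmat.det * algebraMap (Polynomial K) (RatFunc K) q) := by rw [heq]
        _ = (Trat.det * Cmat.det) * algebraMap (Polynomial K) (RatFunc K) q := by
            rw [hTdet]; ring
        _ = algebraMap (Polynomial K) (RatFunc K) q := by rw [hdet1, one_mul]
    have hq' := (IsFractionRing.injective (Polynomial K) (RatFunc K)) hkeyeq
    apply hq
    rw [← hq', map_mul, hdet, zero_mul]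
  · intro hnl
    by_contra he
    exact hnl (key he)
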